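/- Under the same setup (X contains an intercept column, i ≥ 2, Var(X_i) > 0), Stewart's index decomposes as S_i² = VIF(i) + n·X̄_i² / SSR_i, where X̄_i is the sample mean of column i. In particular S_i² = VIF(i) if and only if X̄_i = 0. -/
import Mathlib
open Matrix

lemma ssr_pos_aux {n : ℕ} {ι : Type*} [Fintype ι] [DecidableEq ι]
    (A : Matrix (Fin n) ι ℝ) (v : Fin n → ℝ)
    (hA : LinearIndependent ℝ (fun j => Aᵀ j))
    (hv : ∀ w : ι → ℝ, v ≠ A *ᵥ w) :
    0 < v ⬝ᵥ v - v ⬝ᵥ (A *ᵥ ((Aᵀ * A)⁻¹ *ᵥ (Aᵀ *ᵥ v))) := by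
  have hsum : ∀ w : ι → ℝ, A *ᵥ w = ∑ j, w j • Aᵀ j := by
    intro w; funext r
    simp [mulVec, dotProduct, Finset.sum_apply, mul_comm]
  have hAw : ∀ w : ι → ℝ, A *ᵥ w = 0 → w = 0 := by
    intro w hw
    exact funext (Fintype.linearIndependent_iff.1 hA w ((hsum w).symm.trans hw))
  have hMw : ∀ w : ι → ℝ, (Aᵀ * A) *ᵥ w = 0 → w = 0 := by
    intro w hw
    apply hAw
    rw [← conjTranspose_eq_transpose_of_trivial] at hw
    exact (conjTranspose_mul_self_mulVec_eq_zero A w).1 hw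
  have hinj : Function.Injective (Aᵀ * A).mulVec := by
    intro a b hab
    have : (Aᵀ * A) *ᵥ (a - b) = 0 := by
      rw [mulVec_sub, hab, sub_self]
    exact sub_eq_zero.1 (hMw _ this)
  have hunit : (Aᵀ * A) * (Aᵀ * A)⁻¹ = 1 :=
    mul_nonsing_inv _ ((isUnit_iff_isUnit_det _).1 (mulVec_injective_iff_isUnit.1 hinj))
  set w : ι → ℝ := (Aᵀ * A)⁻¹ *ᵥ (Aᵀ *ᵥ v) with hw
  set r : Fin n → ℝ := v - A *ᵥ w with hr
  have hAAw : Aᵀ *ᵥ (A *ᵥ w) = Aᵀ *ᵥ v := by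
    rw [hw, mulVec_mulVec, mulVec_mulVec, hunit, one_mulVec]
  have hAtr : Aᵀ *ᵥ r = 0 := by
    rw [hr, mulVec_sub, hAAw, sub_self]
  have hdot : r ⬝ᵥ (A *ᵥ w) = 0 := by
    rw [dotProduct_mulVec, ← mulVec_transpose, hAtr, zero_dotProduct]
  have hv' : v = r + A *ᵥ w := by rw [hr]; ring
  have e1 : v ⬝ᵥ v = r ⬝ᵥ r + (A *ᵥ w) ⬝ᵥ (A *ᵥ w) := by
    rw [hv', add_dotProduct, dotProduct_add, dotProduct_add, hdot,
      dotProduct_comm (A *ᵥ w) r, hdot]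
    ring
  have e2 : v ⬝ᵥ (A *ᵥ w) = (A *ᵥ w) ⬝ᵥ (A *ᵥ w) := by
    rw [hv', add_dotProduct, hdot, zero_add]
  have hSSR : v ⬝ᵥ v - v ⬝ᵥ (A *ᵥ w) = r ⬝ᵥ r := by rw [e1, e2]; ring
  rw [hSSR]
  have hrne : r ≠ 0 := fun h0 => hv w (sub_eq_zero.1 (hr.symm.trans h0))
  have hnn : 0 ≤ r ⬝ᵥ r := Finset.sum_nonneg fun i _ => mul_self_nonneg _
  exact lt_of_le_of_ne hnn fun h => hrne (dotProduct_self_eq_zero.1 h.symm)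

/-- With an intercept column, i ≥ 2 and Var(X_i) > 0, Stewart's index
decomposes as S_i² = VIF(i) + n·X̄_i²/SSR_i; in particular S_i² = VIF(i) iff X̄_i = 0. -/
theorem stewart_decomposition {n k : ℕ} (hn : 0 < n) (hk : 0 < k)
    (X : Matrix (Fin n) (Fin k) ℝ) (hrank : LinearIndependent ℝ Xᵀ)
    (hones : ∀ r, X r ⟨0, hk⟩ = 1)
    (i : Fin k) (hi : i ≠ ⟨0, hk⟩) :
    let Xi : Fin n → ℝ := fun r => X r i
    let Xbar : ℝ := (∑ r, Xi r) / n
    let Var : ℝ := (∑ r, (Xi r - Xbar) ^ 2) / n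
    let Xmi : Matrix (Fin n) {j : Fin k // j ≠ i} ℝ :=
      X.submatrix id (fun j => (j : Fin k))
    let SSR : ℝ := Xi ⬝ᵥ Xi - Xi ⬝ᵥ (Xmi *ᵥ ((Xmiᵀ * Xmi)⁻¹ *ᵥ (Xmiᵀ *ᵥ Xi)))
    let VIF : ℝ := (n * Var) / SSR
    let S2 : ℝ := (Xi ⬝ᵥ Xi) / SSR
    0 < Var →
      S2 = VIF + (n * Xbar ^ 2) / SSR ∧ (S2 = VIF ↔ Xbar = 0) := by
  intro Xi Xbar Var Xmi SSR VIF S2 hVar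
  have hnR : (0:ℝ) < n := by exact_mod_cast hn
  -- linear independence of the columns of Xmi
  have hA : LinearIndependent ℝ (fun j : {j : Fin k // j ≠ i} => Xmiᵀ j) :=
    hrank.comp (fun j : {j : Fin k // j ≠ i} => (j : Fin k)) Subtype.val_injective
  -- Xi is not in the span of the other columns
  have hv : ∀ w : {j : Fin k // j ≠ i} → ℝ, Xi ≠ Xmi *ᵥ w := by
    intro w hw
    set c : Fin k → ℝ := fun j => if h : j = i then -1 else w ⟨j, h⟩ with hc
    have hsub : ∑ j ∈ Finset.univ.erase i, c j • Xᵀ j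
        = ∑ j : {j : Fin k // j ≠ i}, w j • Xᵀ (j : Fin k) := by
      rw [Finset.sum_subtype (p := fun j => j ≠ i) (Finset.univ.erase i)
        (fun j => by simp [Finset.mem_erase]) (fun j => c j • Xᵀ j)]
      exact Finset.sum_congr rfl fun j _ => by rw [hc]; simp [j.prop]
    have hmv : ∑ j : {j : Fin k // j ≠ i}, w j • Xᵀ (j : Fin k) = Xmi *ᵥ w := by
      funext r
      simp [mulVec, dotProduct, Finset.sum_apply, mul_comm, Xmi]
    have hzero : ∑ j, c j • Xᵀ j = 0 := by
      rw [← Finset.sum_erase_add _ _ (Finset.mem_univ i), hsub, hmv, ← hw]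
      have : c i = -1 := by rw [hc]; simp
      rw [this]
      funext r
      simp [Xi]
    have := Fintype.linearIndependent_iff.1 hrank c hzero i
    rw [hc] at this
    simp at this
  have hSSRpos : 0 < SSR := ssr_pos_aux Xmi Xi hA hv
  have hSSRne : SSR ≠ 0 := ne_of_gt hSSRpos
  -- the algebraic identity
  have hmean : ∑ r, Xi r = n * Xbar := by
    rw [show Xbar = (∑ r, Xi r) / n from rfl]
    field_simp
  have hvv : Xi ⬝ᵥ Xi = ∑ r, (Xi r)^2 := by
    simp [dotProduct, sq]
  have hsq : ∑ r, (Xi r - Xbar)^2 = (∑ r, (Xi r)^2) - n * Xbar^2 := by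
    calc ∑ r, (Xi r - Xbar)^2
        = ∑ r, ((Xi r)^2 - 2*Xbar*(Xi r) + Xbar^2) := by
          exact Finset.sum_congr rfl fun r _ => by ring
      _ = (∑ r, (Xi r)^2) - 2*Xbar*(∑ r, Xi r) + n * Xbar^2 := by
          rw [Finset.sum_add_distrib, Finset.sum_sub_distrib, ← Finset.mul_sum,
            Finset.sum_const, Finset.card_univ, Fintype.card_fin, nsmul_eq_mul]
      _ = (∑ r, (Xi r)^2) - n * Xbar^2 := by rw [hmean]; ring
  have hnVar : (n:ℝ) * Var = (∑ r, (Xi r)^2) - n * Xbar^2 := by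
    rw [show Var = (∑ r, (Xi r - Xbar) ^ 2) / n from rfl, mul_div_cancel₀ _ (ne_of_gt hnR)]
    exact hsq
  have hkey : Xi ⬝ᵥ Xi = (n:ℝ) * Var + n * Xbar^2 := by
    rw [hvv, hnVar]; ring
  have hdecomp : S2 = VIF + (n * Xbar ^ 2) / SSR := by
    rw [show S2 = (Xi ⬝ᵥ Xi) / SSR from rfl, show VIF = (n * Var) / SSR from rfl,
      hkey, add_div]
  refine ⟨hdecomp, ?_⟩
  rw [hdecomp]
  constructor
  · intro h
    have ht : ((n:ℝ) * Xbar ^ 2) / SSR = 0 := by linarith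
    rcases div_eq_zero_iff.1 ht with h' | h'
    · rcases mul_eq_zero.1 h' with h'' | h''
      · exact absurd h'' (ne_of_gt hnR)
      · exact pow_eq_zero_iff (by norm_num) |>.1 h''
    · exact absurd h' hSSRne
  · intro h
    rw [h]
    ring
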